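/- Let R be a commutative clean ring and h ∈ R[t] a monic polynomial of degree n. If h has a gSP-factorization, then h has a gSP-factorization in which the complete orthogonal set of idempotents has at most n + 1 elements. -/

import Mathlib

/-- A complete orthogonal set of idempotents: finitely many idempotents, pairwise orthogonal,
summing to `1`. -/
def IsCompleteOrthogonalIdempotents {R : Type*} [CommRing R] {k : ℕ} (e : Fin k → R) : Prop :=
  (∀ i, IsIdempotentElem (e i)) ∧ (∀ i j, i ≠ j → e i * e j = 0) ∧ ∑ i, e i = 1

/-- An SP-factorization of a monic polynomial `h` is a factorization `h = h₀ * p₀` into monic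
polynomials with `h₀(0)` a unit and all coefficients of `p₀ - t^(deg p₀)` nilpotent. -/
def HasSPFactorization {R : Type*} [CommRing R] (h : Polynomial R) : Prop :=
  ∃ h₀ p₀ : Polynomial R, h₀.Monic ∧ p₀.Monic ∧ h = h₀ * p₀ ∧
    IsUnit (h₀.eval 0) ∧ ∀ i, IsNilpotent ((p₀ - Polynomial.X ^ p₀.natDegree).coeff i)

/-- A monic `h ∈ R[t]` has a gSP-factorization if there is a complete orthogonal set of
idempotents `e₁, …, e_k` such that the image of `h` in `(R/(1-eᵢ))[t]` has an SP-factorization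
for each `i`. -/
def HasGSPFactorization {R : Type*} [CommRing R] (h : Polynomial R) : Prop :=
  ∃ (k : ℕ) (e : Fin k → R), IsCompleteOrthogonalIdempotents e ∧
    ∀ i, HasSPFactorization (h.map (Ideal.Quotient.mk (Ideal.span {1 - e i})))

/-- A ring is *clean* if every element is the sum of an idempotent and a unit. -/
def IsCleanRing (R : Type*) [Ring R] : Prop :=
  ∀ a : R, ∃ e u : R, IsIdempotentElem e ∧ IsUnit u ∧ a = e + u

open Polynomial

section Aux

variable {R : Type*} [CommRing R]

/-- If `r` dies in `R/(1-e)` for an idempotent `e`, then `e * r = 0`. -/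
lemma idem_ann {e r : R} (he : IsIdempotentElem e)
    (hr : Ideal.Quotient.mk (Ideal.span {1 - e}) r = 0) : e * r = 0 := by
  obtain ⟨c, hc⟩ := Ideal.mem_span_singleton'.mp (Ideal.Quotient.eq_zero_iff_mem.mp hr)
  have he' : e * e = e := he
  linear_combination (-c) * he' - e * hc

lemma hasSP_of_subsingleton {S : Type*} [CommRing S] [Subsingleton S] (q : Polynomial S) :
    HasSPFactorization q :=
  ⟨1, 1, monic_one, monic_one, Subsingleton.elim _ _, by simp,
    fun _ => ⟨1, Subsingleton.elim _ _⟩⟩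

lemma sum_orth_mul {ι : Type*} [DecidableEq ι] {e : ι → R}
    (hid : ∀ i, IsIdempotentElem (e i)) (horth : ∀ i j, i ≠ j → e i * e j = 0)
    (s t : Finset ι) :
    (∑ i ∈ s, e i) * (∑ j ∈ t, e j) = ∑ i ∈ s ∩ t, e i := by
  rw [Finset.sum_mul_sum]
  rw [← Finset.sum_ite_mem]
  refine Finset.sum_congr rfl fun i hi => ?_
  by_cases hit : i ∈ t
  · rw [if_pos hit]
    exact (Finset.sum_eq_single_of_mem i hit fun j hj hne =>
      horth i j (Ne.symm hne)).trans (hid i)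
  · rw [if_neg hit]
    exact Finset.sum_eq_zero fun j hj => horth i j (by rintro rfl; exact hit hj)

/-- Merging SP-factorizations over a family of orthogonal idempotents whose nilpotent
parts have common degree `d`. -/
lemma merge_SP (h : Polynomial R) (hm : h.Monic) {ι : Type*} [DecidableEq ι] (e : ι → R)
    (hid : ∀ i, IsIdempotentElem (e i)) (horth : ∀ i j, i ≠ j → e i * e j = 0)
    (s : Finset ι) (d : ℕ)
    (hsp : ∀ i ∈ s, ∃ h₀ p₀ : Polynomial (R ⧸ Ideal.span {1 - e i}),
      h₀.Monic ∧ p₀.Monic ∧ h.map (Ideal.Quotient.mk _) = h₀ * p₀ ∧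
      IsUnit (h₀.eval 0) ∧ p₀.natDegree = d ∧
      ∀ j, IsNilpotent ((p₀ - X ^ d).coeff j)) :
    HasSPFactorization (h.map (Ideal.Quotient.mk (Ideal.span {1 - ∑ i ∈ s, e i}))) := by
  set E := ∑ i ∈ s, e i with hE
  set mkE := Ideal.Quotient.mk (Ideal.span {1 - E}) with hmkE
  rcases subsingleton_or_nontrivial (R ⧸ Ideal.span {1 - E}) with hQ | hQ
  · exact hasSP_of_subsingleton _
  have key : ∀ i ∈ s, ∃ (α β : Polynomial R) (u : R), β.Monic ∧ β.natDegree = d ∧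
      C (e i) * (h - α * β) = 0 ∧ e i * (α.eval 0 * u) = e i ∧
      ∀ j, j < d → IsNilpotent (e i * β.coeff j) := by
    intro i hi
    obtain ⟨h₀, p₀, hm0, hmp, heq, hu0, hdp, hnil⟩ := hsp i hi
    set π := Ideal.Quotient.mk (Ideal.span {1 - e i}) with hπ
    obtain ⟨α, hα⟩ := Polynomial.map_surjective π Ideal.Quotient.mk_surjective h₀
    obtain ⟨β, hβ, hβd, hβm⟩ := Polynomial.lifts_and_natDegree_eq_and_monic
      ((Polynomial.mem_lifts _).mpr (Polynomial.map_surjective π Ideal.Quotient.mk_surjective p₀))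
      hmp
    obtain ⟨w, hw⟩ := hu0
    obtain ⟨u, hu'⟩ := Ideal.Quotient.mk_surjective ((↑(w⁻¹) : R ⧸ Ideal.span {1 - e i}))
    refine ⟨α, β, u, hβm, hβd.trans hdp, ?_, ?_, ?_⟩
    · ext j
      rw [coeff_C_mul, coeff_zero]
      apply idem_ann (hid i)
      have hz : ((h - α * β).map π) = 0 := by
        rw [Polynomial.map_sub, Polynomial.map_mul, hα, hβ, heq, sub_self]
      rw [show π ((h - α * β).coeff j) = ((h - α * β).map π).coeff j from (coeff_map π j).symm,
        hz, coeff_zero]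
    · have h1 : π (α.eval 0 * u - 1) = 0 := by
        have : π (α.eval 0) = h₀.eval 0 := by
          rw [← Polynomial.eval_zero_map π α, hα]
        rw [map_sub, map_mul, map_one, hu', this, ← hw, Units.mul_inv, sub_self]
      have h2 := idem_ann (hid i) h1
      rw [mul_sub, mul_one, sub_eq_zero] at h2
      exact h2
    · intro j hj
      obtain ⟨m, hm'⟩ := hnil j
      have hc : π (β.coeff j) = (p₀ - X ^ d).coeff j := by
        rw [← coeff_map, hβ, coeff_sub, coeff_X_pow, if_neg hj.ne, sub_zero]
      have h0 : π ((β.coeff j) ^ m) = 0 := by rw [map_pow, hc, hm']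
      have h2 := idem_ann (hid i) h0
      exact ⟨m + 1, by rw [mul_pow, (hid i).pow_succ_eq, pow_succ, ← mul_assoc, h2, zero_mul]⟩
  choose α β u hβm hβd hker huu hnl using key
  set A := ∑ i ∈ s.attach, C (e i.1) * α i.1 i.2 with hA
  set B := ∑ i ∈ s.attach, C (e i.1) * β i.1 i.2 with hB
  have hE1 : mkE E = 1 := by
    have h0 : mkE (1 - E) = 0 :=
      Ideal.Quotient.eq_zero_iff_mem.mpr (Ideal.mem_span_singleton_self _)
    rw [map_sub, map_one, sub_eq_zero] at h0
    exact h0.symm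
  have hBc : ∀ j, B.coeff j = ∑ i ∈ s.attach, e i.1 * (β i.1 i.2).coeff j := by
    intro j
    rw [hB, Polynomial.finset_sum_coeff]
    exact Finset.sum_congr rfl fun i _ => coeff_C_mul _
  have hBd : B.coeff d = E := by
    rw [hBc, hE, ← Finset.sum_attach s e]
    refine Finset.sum_congr rfl fun i _ => ?_
    have h1 : (β i.1 i.2).coeff d = 1 := by
      have := (hβm i.1 i.2).coeff_natDegree
      rwa [hβd] at this
    rw [h1, mul_one]
  have hBj : ∀ j, d < j → B.coeff j = 0 := by
    intro j hj
    rw [hBc]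
    refine Finset.sum_eq_zero fun i _ => ?_
    rw [Polynomial.coeff_eq_zero_of_natDegree_lt (by rw [hβd]; exact hj), mul_zero]
  set P := B.map mkE with hP
  have hPc : ∀ j, P.coeff j = mkE (B.coeff j) := fun j => coeff_map mkE j
  have hPd : P.coeff d = 1 := by rw [hPc, hBd, hE1]
  have hPj : ∀ j, d < j → P.coeff j = 0 := fun j hj => by rw [hPc, hBj j hj, map_zero]
  have hPdeg : P.natDegree = d :=
    le_antisymm (natDegree_le_iff_coeff_eq_zero.mpr fun N hN => hPj N hN)
      (le_natDegree_of_ne_zero (by rw [hPd]; exact one_ne_zero))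
  have hPm : P.Monic := by
    have : P.leadingCoeff = 1 := by rw [leadingCoeff, hPdeg, hPd]
    exact this
  have hABh : A * B = C E * h := by
    rw [hA, hB, Finset.sum_mul_sum]
    have hinner : ∀ i ∈ s.attach,
        ∑ j ∈ s.attach, (C (e i.1) * α i.1 i.2) * (C (e j.1) * β j.1 j.2)
          = C (e i.1) * h := by
      intro i hi
      rw [Finset.sum_eq_single_of_mem i hi (fun j hj hne => ?_)]
      · have hk := hker i.1 i.2
        rw [mul_sub, sub_eq_zero] at hk
        have hii : e i.1 * e i.1 = e i.1 := hid i.1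
        calc (C (e i.1) * α i.1 i.2) * (C (e i.1) * β i.1 i.2)
            = C (e i.1) * (C (e i.1) * (α i.1 i.2 * β i.1 i.2)) := by ring
          _ = C (e i.1) * (C (e i.1) * h) := by rw [← hk]
          _ = C (e i.1 * e i.1) * h := by rw [C_mul]; ring
          _ = C (e i.1) * h := by rw [hii]
      · have h0 : e i.1 * e j.1 = 0 :=
          horth _ _ (fun hh => hne (Subtype.ext hh).symm)
        calc (C (e i.1) * α i.1 i.2) * (C (e j.1) * β j.1 j.2)
            = C (e i.1 * e j.1) * (α i.1 i.2 * β j.1 j.2) := by rw [C_mul]; ring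
          _ = 0 := by rw [h0, C_0, zero_mul]
    rw [Finset.sum_congr rfl hinner, ← Finset.sum_mul, ← map_sum (C : R →+* Polynomial R)]
    rw [Finset.sum_attach s e]
  have hfac : h.map mkE = (A.map mkE) * P := by
    rw [hP, ← Polynomial.map_mul, hABh, Polynomial.map_mul, map_C, hE1, C_1, one_mul]
  have hHm : (A.map mkE).Monic := by
    apply Monic.of_mul_monic_left hPm
    rw [mul_comm, ← hfac]
    exact hm.map mkE
  have hAu : IsUnit ((A.map mkE).eval 0) := by
    rw [Polynomial.eval_zero_map]
    apply IsUnit.of_mul_eq_one (mkE (∑ i ∈ s.attach, e i.1 * u i.1 i.2))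
    rw [← map_mul]
    have hev : A.eval 0 = ∑ i ∈ s.attach, e i.1 * (α i.1 i.2).eval 0 := by
      rw [hA, Polynomial.eval_finset_sum]
      exact Finset.sum_congr rfl fun i _ => by rw [eval_mul, eval_C]
    have hEq : A.eval 0 * (∑ i ∈ s.attach, e i.1 * u i.1 i.2) = E := by
      rw [hev, Finset.sum_mul_sum]
      have hinner : ∀ i ∈ s.attach,
          ∑ j ∈ s.attach, (e i.1 * (α i.1 i.2).eval 0) * (e j.1 * u j.1 j.2) = e i.1 := by
        intro i hi
        rw [Finset.sum_eq_single_of_mem i hi (fun j hj hne => ?_)]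
        · have hii : e i.1 * e i.1 = e i.1 := hid i.1
          calc (e i.1 * (α i.1 i.2).eval 0) * (e i.1 * u i.1 i.2)
              = (e i.1 * e i.1) * ((α i.1 i.2).eval 0 * u i.1 i.2) := by ring
            _ = e i.1 * ((α i.1 i.2).eval 0 * u i.1 i.2) := by rw [hii]
            _ = e i.1 := huu i.1 i.2
        · have h0 : e i.1 * e j.1 = 0 :=
            horth _ _ (fun hh => hne (Subtype.ext hh).symm)
          calc (e i.1 * (α i.1 i.2).eval 0) * (e j.1 * u j.1 j.2)
              = (e i.1 * e j.1) * ((α i.1 i.2).eval 0 * u j.1 j.2) := by ring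
            _ = 0 := by rw [h0, zero_mul]
      rw [Finset.sum_congr rfl hinner, Finset.sum_attach s e]
    rw [hEq]
    exact hE1
  refine ⟨A.map mkE, P, hHm, hPm, hfac, hAu, ?_⟩
  intro j
  rw [hPdeg, coeff_sub, coeff_X_pow]
  rcases lt_trichotomy j d with hj | hj | hj
  · rw [if_neg hj.ne, sub_zero, hPc]
    have hn : IsNilpotent (B.coeff j) := by
      rw [hBc]
      exact isNilpotent_sum fun i _ => hnl i.1 i.2 j hj
    exact hn.map mkE
  · subst hj
    rw [if_pos rfl, hPd, sub_self]
    exact IsNilpotent.zero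
  · rw [if_neg hj.ne', sub_zero, hPj j hj]
    exact IsNilpotent.zero

end Aux

/-- If a monic polynomial of degree `n` over a commutative clean ring has a
gSP-factorization, then it has one whose complete orthogonal set of idempotents has at most
`n + 1` elements. -/
theorem gSPFactorization_card_le {R : Type*} [CommRing R] (hR : IsCleanRing R)
    {n : ℕ} (h : Polynomial R) (hmonic : h.Monic) (hdeg : h.natDegree = n)
    (hg : HasGSPFactorization h) :
    ∃ m : ℕ, m ≤ n + 1 ∧ ∃ e : Fin m → R, IsCompleteOrthogonalIdempotents e ∧
      ∀ i, HasSPFactorization (h.map (Ideal.Quotient.mk (Ideal.span {1 - e i}))) := by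
  obtain ⟨k, e, ⟨hid, horth, hsum⟩, hsp⟩ := hg
  choose h₀ p₀ hm0 hmp heq hu hnil using hsp
  have hd : ∀ i, (p₀ i).natDegree ≤ n := by
    intro i
    rcases subsingleton_or_nontrivial (R ⧸ Ideal.span {1 - e i}) with hQ | hQ
    · have : p₀ i = 0 := Subsingleton.elim _ _
      rw [this, natDegree_zero]
      exact Nat.zero_le n
    · have hne : h.map (Ideal.Quotient.mk (Ideal.span {1 - e i})) ≠ 0 :=
        (hmonic.map _).ne_zero
      have hdvd : p₀ i ∣ h.map (Ideal.Quotient.mk (Ideal.span {1 - e i})) :=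
        ⟨h₀ i, by rw [heq i, mul_comm]⟩
      have hmul := (hm0 i).natDegree_mul (hmp i)
      rw [← heq i, hmonic.natDegree_map, hdeg] at hmul
      omega
  set δ : Fin k → Fin (n + 1) := fun i => ⟨(p₀ i).natDegree, Nat.lt_succ_of_le (hd i)⟩ with hδ
  refine ⟨n + 1, le_refl _,
    fun j => ∑ i ∈ Finset.univ.filter (fun i => δ i = j), e i, ⟨?_, ?_, ?_⟩, ?_⟩
  · intro j
    show _ * _ = _
    rw [sum_orth_mul hid horth, Finset.inter_self]
  · intro j j' hne
    rw [sum_orth_mul hid horth]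
    have hempty : (Finset.univ.filter (fun i => δ i = j)) ∩
        (Finset.univ.filter (fun i => δ i = j')) = ∅ := by
      ext i
      simp only [Finset.mem_inter, Finset.mem_filter, Finset.mem_univ, true_and,
        Finset.notMem_empty, iff_false, not_and]
      rintro rfl h'
      exact hne h'
    rw [hempty, Finset.sum_empty]
  · rw [Finset.sum_fiberwise Finset.univ δ e]
    exact hsum
  · intro j
    apply merge_SP h hmonic e hid horth _ (j : ℕ)
    intro i hi
    have hij : δ i = j := (Finset.mem_filter.mp hi).2
    have hdi : (p₀ i).natDegree = (j : ℕ) := by rw [← hij]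
    refine ⟨h₀ i, p₀ i, hm0 i, hmp i, heq i, hu i, hdi, ?_⟩
    intro jj
    have := hnil i jj
    rwa [hdi] at this
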